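/- Removing the entry 1 from a 3-stack-sortable permutation π ∈ S_n (n ≥ 2) and then decreasing each remaining entry by 1 yields a 3-stack-sortable permutation in S_{n-1}. -/

import Mathlib

/-- The stack-sorting map, implemented with a fuel parameter (fuel `l.length`
always suffices since the maximum entry is removed at each level). -/
def stackSortAux : ℕ → List ℕ → List ℕ
  | 0, _ => []
  | _ + 1, [] => []
  | fuel + 1, l =>
      let m := l.foldr max 0
      stackSortAux fuel (l.takeWhile (fun x => x != m)) ++
        stackSortAux fuel ((l.dropWhile (fun x => x != m)).tail) ++ [m]

/-- The stack-sorting map `s`: `s(LmR) = s(L) s(R) m` where `m` is the largest entry. -/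
def stackSort (l : List ℕ) : List ℕ := stackSortAux l.length l

lemma foldr_max_le {l : List ℕ} {m : ℕ} (h : ∀ x ∈ l, x ≤ m) : l.foldr max 0 ≤ m := by
  induction l with
  | nil => simp
  | cons a t ih =>
      simp only [List.foldr_cons, max_le_iff]
      exact ⟨h a (by simp), ih fun x hx => h x (by simp [hx])⟩

lemma le_foldr_max {l : List ℕ} {a : ℕ} (h : a ∈ l) : a ≤ l.foldr max 0 := by
  induction l with
  | nil => simp at h
  | cons b t ih =>
      rcases List.mem_cons.1 h with rfl | h
      · simp
      · exact le_trans (ih h) (by simp)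

lemma foldr_max_mem {l : List ℕ} (h : l ≠ []) : l.foldr max 0 ∈ l := by
  induction l with
  | nil => simp at h
  | cons a t ih =>
      rcases eq_or_ne t [] with rfl | ht
      · simp
      · rcases max_cases a (t.foldr max 0) with ⟨h1, _⟩ | ⟨h1, _⟩ <;>
          simp only [List.foldr_cons, h1]
        · simp
        · exact List.mem_cons_of_mem _ (ih ht)

lemma foldr_max_eq {l : List ℕ} {m : ℕ} (hm : m ∈ l) (h : ∀ x ∈ l, x ≤ m) :
    l.foldr max 0 = m := le_antisymm (foldr_max_le h) (le_foldr_max hm)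

lemma aux_unfold (fuel : ℕ) {l : List ℕ} (h : l ≠ []) :
    stackSortAux (fuel + 1) l =
      stackSortAux fuel (l.takeWhile (fun x => x != l.foldr max 0)) ++
        stackSortAux fuel ((l.dropWhile (fun x => x != l.foldr max 0)).tail) ++
          [l.foldr max 0] := by
  cases l with
  | nil => simp at h
  | cons a t => rfl

lemma dropWhile_eq {l : List ℕ} (h : l ≠ []) :
    l.dropWhile (fun x => x != l.foldr max 0) =
      l.foldr max 0 :: (l.dropWhile (fun x => x != l.foldr max 0)).tail := by
  set m := l.foldr max 0 with hm
  have hne : l.dropWhile (fun x => x != m) ≠ [] := by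
    intro hc
    have hmem := foldr_max_mem h
    rw [← hm] at hmem
    have : l.takeWhile (fun x => x != m) = l := by
      have := List.takeWhile_append_dropWhile (p := fun x => x != m) (l := l)
      rw [hc, List.append_nil] at this; exact this
    have := List.mem_takeWhile_imp (by rw [this]; exact hmem)
    simp at this
  have hhead := List.head_dropWhile_not (fun x => x != m) (l := l) hne
  have : (l.dropWhile (fun x => x != m)).head hne = m := by
    simpa using hhead
  conv_lhs => rw [← List.cons_head_tail hne, this]

lemma takeWhile_lt {l : List ℕ} (h : l ≠ []) :
    (l.takeWhile (fun x => x != l.foldr max 0)).length < l.length := by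
  conv_rhs => rw [← List.takeWhile_append_dropWhile (p := fun x => x != l.foldr max 0) (l := l)]
  rw [List.length_append, dropWhile_eq h]
  simp

lemma tail_lt {l : List ℕ} (h : l ≠ []) :
    ((l.dropWhile (fun x => x != l.foldr max 0)).tail).length < l.length := by
  conv_rhs => rw [← List.takeWhile_append_dropWhile (p := fun x => x != l.foldr max 0) (l := l)]
  rw [List.length_append, dropWhile_eq h]
  simp only [List.length_cons, List.length_tail]
  omega

lemma aux_fuel : ∀ (fuel fuel' : ℕ) (l : List ℕ), l.length ≤ fuel → l.length ≤ fuel' →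
    stackSortAux fuel l = stackSortAux fuel' l := by
  intro fuel
  induction fuel with
  | zero =>
      intro fuel' l h h'
      rw [List.length_eq_zero_iff.1 (Nat.le_zero.1 h)]
      cases fuel' <;> rfl
  | succ f ih =>
      intro fuel' l h h'
      rcases eq_or_ne l [] with rfl | hne
      · cases fuel' <;> rfl
      · have hl : 1 ≤ l.length := List.length_pos_iff.2 hne
        cases fuel' with
        | zero => omega
        | succ f' =>
            rw [aux_unfold f hne, aux_unfold f' hne]
            have h1 := takeWhile_lt hne
            have h2 := tail_lt hne
            rw [ih f' _ (by omega) (by omega), ih f' _ (by omega) (by omega)]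

lemma aux_perm : ∀ (fuel : ℕ) (l : List ℕ), l.length ≤ fuel →
    List.Perm (stackSortAux fuel l) l := by
  intro fuel
  induction fuel with
  | zero =>
      intro l h
      rw [List.length_eq_zero_iff.1 (Nat.le_zero.1 h)]
      rfl
  | succ f ih =>
      intro l h
      rcases eq_or_ne l [] with rfl | hne
      · rfl
      · rw [aux_unfold f hne]
        have h1 := takeWhile_lt hne
        have h2 := tail_lt hne
        have p1 := ih (l.takeWhile (fun x => x != l.foldr max 0)) (by omega)
        have p2 := ih ((l.dropWhile (fun x => x != l.foldr max 0)).tail) (by omega)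
        have step1 := (p1.append p2).append (List.Perm.refl [l.foldr max 0])
        have step2 : List.Perm
            (l.takeWhile (fun x => x != l.foldr max 0) ++
              (l.dropWhile (fun x => x != l.foldr max 0)).tail ++ [l.foldr max 0]) l := by
          rw [List.append_assoc]
          refine List.Perm.trans
            ((List.Perm.refl _).append (List.perm_append_singleton _ _)) ?_
          rw [← dropWhile_eq hne, List.takeWhile_append_dropWhile]
        exact step1.trans step2

lemma stackSort_perm (l : List ℕ) : List.Perm (stackSort l) l := aux_perm _ _ le_rfl

lemma takeWhile_congr' {p q : ℕ → Bool} : ∀ {l : List ℕ}, (∀ x ∈ l, p x = q x) →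
    l.takeWhile p = l.takeWhile q
  | [], _ => rfl
  | a :: t, h => by
      simp only [List.takeWhile_cons, h a (by simp)]
      cases hq : q a
      · simp
      · simp [takeWhile_congr' (l := t) fun x hx => h x (List.mem_cons_of_mem _ hx)]

lemma dropWhile_congr' {p q : ℕ → Bool} : ∀ {l : List ℕ}, (∀ x ∈ l, p x = q x) →
    l.dropWhile p = l.dropWhile q
  | [], _ => rfl
  | a :: t, h => by
      simp only [List.dropWhile_cons, h a (by simp)]
      cases hq : q a
      · simp
      · simp [dropWhile_congr' (l := t) fun x hx => h x (List.mem_cons_of_mem _ hx)]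

lemma bne_sub {a b : ℕ} (h : 1 ≤ a) (h2 : 1 ≤ b) : (a - 1 != b - 1) = (a != b) := by
  rcases Bool.eq_false_or_eq_true (a != b) with h3 | h3 <;>
    rw [h3] <;> simp_all [bne_iff_ne] <;> omega

lemma aux_map : ∀ (fuel : ℕ) (l : List ℕ), (∀ x ∈ l, 2 ≤ x) →
    stackSortAux fuel (l.map (· - 1)) = (stackSortAux fuel l).map (· - 1) := by
  intro fuel
  induction fuel with
  | zero => intro l _; rfl
  | succ f ih =>
      intro l h2
      rcases eq_or_ne l [] with rfl | hne
      · rfl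
      · have hne' : l.map (· - 1) ≠ [] := by simpa using hne
        set m := l.foldr max 0 with hm
        have hmmem : m ∈ l := foldr_max_mem hne
        have hm2 : 2 ≤ m := h2 m hmmem
        have hmax' : (l.map (· - 1)).foldr max 0 = m - 1 := by
          refine foldr_max_eq (List.mem_map.2 ⟨m, hmmem, rfl⟩) ?_
          rintro y hy
          obtain ⟨x, hx, rfl⟩ := List.mem_map.1 hy
          exact Nat.sub_le_sub_right (le_foldr_max hx) 1
        rw [aux_unfold f hne, aux_unfold f hne', hmax', ← hm]
        have hcong : ∀ x ∈ l, ((fun y => y != m - 1) ∘ (· - 1)) x = (fun y => y != m) x := by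
          intro x hx
          exact bne_sub (by have := h2 x hx; omega) (by omega)
        have htake : (l.map (· - 1)).takeWhile (fun y => y != m - 1) =
            (l.takeWhile (fun y => y != m)).map (· - 1) := by
          rw [List.takeWhile_map, takeWhile_congr' hcong]
        have hdrop : (l.map (· - 1)).dropWhile (fun y => y != m - 1) =
            (l.dropWhile (fun y => y != m)).map (· - 1) := by
          rw [List.dropWhile_map, dropWhile_congr' hcong]
        rw [htake, hdrop, ← List.map_tail]
        rw [ih _ (fun x hx => h2 x ((List.takeWhile_sublist _).mem hx)),
            ih _ (fun x hx => h2 x (((List.tail_sublist _).trans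
              (List.dropWhile_sublist _)).mem hx))]
        simp

lemma aux_nil (fuel : ℕ) : stackSortAux fuel [] = [] := by cases fuel <;> rfl

lemma takeWhile_middle {p : ℕ → Bool} {b : ℕ} (hb : p b = false) :
    ∀ {A : List ℕ} (B : List ℕ), (∀ x ∈ A, p x = true) → (A ++ b :: B).takeWhile p = A
  | [], B, _ => by simp [List.takeWhile_cons, hb]
  | a :: t, B, hA => by
      simp only [List.cons_append, List.takeWhile_cons, hA a (by simp)]
      rw [takeWhile_middle hb B fun x hx => hA x (List.mem_cons_of_mem _ hx)]
      simp

lemma dropWhile_middle {p : ℕ → Bool} {b : ℕ} (hb : p b = false) :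
    ∀ {A : List ℕ} (B : List ℕ), (∀ x ∈ A, p x = true) →
      (A ++ b :: B).dropWhile p = b :: B
  | [], B, _ => by simp [List.dropWhile_cons, hb]
  | a :: t, B, hA => by
      simp only [List.cons_append, List.dropWhile_cons, hA a (by simp)]
      rw [dropWhile_middle hb B fun x hx => hA x (List.mem_cons_of_mem _ hx)]
      simp

lemma aux_erase : ∀ (fuel : ℕ) (l : List ℕ), l.length ≤ fuel → l.Nodup →
    (∀ x ∈ l, 1 ≤ x) →
    stackSortAux fuel (l.erase 1) = (stackSortAux fuel l).erase 1 := by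
  intro fuel
  induction fuel with
  | zero =>
      intro l h _ _
      rw [List.length_eq_zero_iff.1 (Nat.le_zero.1 h)]
      rfl
  | succ f ih =>
      intro l h hnd h1
      rcases eq_or_ne l [] with rfl | hne
      · rfl
      by_cases hmem : (1 : ℕ) ∈ l
      case neg =>
        rw [List.erase_of_not_mem hmem, List.erase_of_not_mem
          (fun hc => hmem ((aux_perm _ _ h).mem_iff.1 hc))]
      have hmmem : l.foldr max 0 ∈ l := foldr_max_mem hne
      have hm1 : 1 ≤ l.foldr max 0 := h1 _ hmmem
      rcases eq_or_lt_of_le hm1 with hm1' | hm2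
      · -- maximum is 1, so l = [1]
        have hall : ∀ x ∈ l, x = 1 := fun x hx =>
          le_antisymm (hm1' ▸ le_foldr_max hx) (h1 x hx)
        have hl1 : l = [1] := by
          cases l with
          | nil => simp at hmem
          | cons a t =>
              have ha : a = 1 := hall a (by simp)
              have ht : t = [] := by
                rw [List.eq_nil_iff_forall_not_mem]
                intro x hx
                have := hall x (List.mem_cons_of_mem _ hx)
                subst this ha
                exact (List.nodup_cons.1 hnd).1 hx
              rw [ha, ht]
        subst hl1
        rw [show ([1] : List ℕ).erase 1 = [] from rfl, aux_nil,
          aux_unfold f (by simp)]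
        simp [List.takeWhile, List.dropWhile, aux_nil]
      · -- maximum m ≥ 2
        set m := l.foldr max 0 with hm
        set p := fun x : ℕ => x != m with hp
        have hpm : p m = false := by simp [hp]
        set L := l.takeWhile p with hL
        set T := (l.dropWhile p).tail with hT
        have hdecomp : l = L ++ m :: T := by
          conv_lhs => rw [← List.takeWhile_append_dropWhile (p := p) (l := l)]
          rw [dropWhile_eq hne]
        have hLp : ∀ x ∈ L, p x = true := fun x hx => List.mem_takeWhile_imp hx
        have hLsub : L.Sublist l := List.takeWhile_sublist p
        have hTsub : T.Sublist l :=
          (List.tail_sublist _).trans (List.dropWhile_sublist p)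
        have hLnd := hnd.sublist hLsub
        have hTnd := hnd.sublist hTsub
        have hL1 : ∀ x ∈ L, 1 ≤ x := fun x hx => h1 x (hLsub.mem hx)
        have hT1 : ∀ x ∈ T, 1 ≤ x := fun x hx => h1 x (hTsub.mem hx)
        have hlen : l.length = L.length + T.length + 1 := by
          rw [hdecomp]; simp; omega
        have hLlen : L.length ≤ f := by omega
        have hTlen : T.length ≤ f := by omega
        have h1m : (1 : ℕ) ≠ m := by omega
        have hmem' : m ∈ l.erase 1 := (List.mem_erase_of_ne h1m.symm).2 hmmem
        have hmax' : (l.erase 1).foldr max 0 = m :=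
          foldr_max_eq hmem' fun x hx => le_foldr_max ((l.erase_sublist (a := 1)).mem hx)
        by_cases h1L : (1 : ℕ) ∈ L
        · have herase : l.erase 1 = L.erase 1 ++ m :: T := by
            rw [hdecomp, List.erase_append_left _ h1L]
          have hne' : l.erase 1 ≠ [] := by rw [herase]; simp
          have hL'p : ∀ x ∈ L.erase 1, p x = true := fun x hx =>
            hLp x ((L.erase_sublist (a := 1)).mem hx)
          rw [aux_unfold f hne', hmax', ← hp, herase,
            takeWhile_middle hpm T hL'p, dropWhile_middle hpm T hL'p,
            List.tail_cons, ih L hLlen hLnd hL1,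
            aux_unfold f hne, ← hm, ← hp, ← hL, ← hT]
          have h1sL : (1 : ℕ) ∈ stackSortAux f L := (aux_perm f L hLlen).mem_iff.2 h1L
          conv_rhs => rw [List.append_assoc, List.erase_append_left _ h1sL]
          rw [List.append_assoc]
        · have h1T : (1 : ℕ) ∈ T := by
            have := hmem
            rw [hdecomp] at this
            rcases List.mem_append.1 this with h' | h'
            · exact absurd h' h1L
            · rcases List.mem_cons.1 h' with h'' | h''
              · exact absurd h'' h1m
              · exact h''
          have herase : l.erase 1 = L ++ m :: T.erase 1 := by
            rw [hdecomp, List.erase_append_right _ h1L,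
              List.erase_cons_tail (by simp [h1m.symm])]
          have hne' : l.erase 1 ≠ [] := by rw [herase]; simp
          rw [aux_unfold f hne', hmax', ← hp, herase,
            takeWhile_middle hpm (T.erase 1) hLp, dropWhile_middle hpm (T.erase 1) hLp,
            List.tail_cons, ih T hTlen hTnd hT1,
            aux_unfold f hne, ← hm, ← hp, ← hL, ← hT]
          have h1nsL : (1 : ℕ) ∉ stackSortAux f L := fun hc =>
            h1L ((aux_perm f L hLlen).mem_iff.1 hc)
          have h1sT : (1 : ℕ) ∈ stackSortAux f T := (aux_perm f T hTlen).mem_iff.2 h1T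
          conv_rhs => rw [List.append_assoc, List.erase_append_right _ h1nsL,
            List.erase_append_left _ h1sT]
          rw [List.append_assoc]

lemma stackSort_map {l : List ℕ} (h2 : ∀ x ∈ l, 2 ≤ x) :
    stackSort (l.map (· - 1)) = (stackSort l).map (· - 1) := by
  unfold stackSort
  rw [List.length_map]
  exact aux_map _ _ h2

lemma stackSort_erase {l : List ℕ} (hnd : l.Nodup) (h1 : ∀ x ∈ l, 1 ≤ x) :
    stackSort (l.erase 1) = (stackSort l).erase 1 := by
  unfold stackSort
  rw [aux_fuel _ l.length _ le_rfl (l.erase_sublist (a := 1)).length_le]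
  exact aux_erase _ _ le_rfl hnd h1

lemma map_sub_range' : ∀ (k s : ℕ), (List.range' (s + 1) k).map (· - 1) = List.range' s k
  | 0, s => rfl
  | k + 1, s => by
      rw [List.range'_succ, List.range'_succ, List.map_cons, Nat.add_sub_cancel]
      have := map_sub_range' k (s + 1)
      simpa using this

/-- Removing the entry `1` from a 3-stack-sortable permutation `π ∈ S_n` (`n ≥ 2`)
and decreasing each remaining entry by `1` yields a 3-stack-sortable
permutation in `S_{n-1}`. -/
theorem stmt8 (n : ℕ) (hn : 2 ≤ n) (π : List ℕ)
    (hπ : List.Perm π (List.range' 1 n))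
    (h3 : stackSort^[3] π = List.range' 1 n) :
    List.Perm ((π.erase 1).map (· - 1)) (List.range' 1 (n - 1)) ∧
      stackSort^[3] ((π.erase 1).map (· - 1)) = List.range' 1 (n - 1) := by
  obtain ⟨k, rfl⟩ : ∃ k, n = k + 1 := ⟨n - 1, by omega⟩
  have hk : 1 ≤ k := by omega
  have hrange : List.range' 1 (k + 1) = 1 :: List.range' 2 k := by
    rw [List.range'_succ]
  have herange : (List.range' 1 (k + 1)).erase 1 = List.range' 2 k := by
    rw [hrange, List.erase_cons_head]
  have hnsub : (k + 1 : ℕ) - 1 = k := by omega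
  rw [hnsub]
  have hperm : List.Perm ((π.erase 1).map (· - 1)) (List.range' 1 k) := by
    have := (hπ.erase 1).map (· - 1)
    rw [herange] at this
    rw [← map_sub_range' k 1]
    exact this
  refine ⟨hperm, ?_⟩
  have step : ∀ u : List ℕ, List.Perm u (List.range' 1 (k + 1)) →
      stackSort ((u.erase 1).map (· - 1)) = ((stackSort u).erase 1).map (· - 1) := by
    intro u hu
    have hnd : u.Nodup := hu.nodup_iff.2 (List.nodup_range' _)
    have h1 : ∀ x ∈ u, 1 ≤ x := fun x hx => (List.mem_range'_1.1 (hu.subset hx)).1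
    have h2 : ∀ x ∈ u.erase 1, 2 ≤ x := by
      intro x hx
      have : x ∈ List.range' 2 k := by
        rw [← herange]; exact (hu.erase 1).subset hx
      exact (List.mem_range'_1.1 this).1
    rw [stackSort_map h2, stackSort_erase hnd h1]
  have sperm : ∀ u : List ℕ, List.Perm u (List.range' 1 (k + 1)) →
      List.Perm (stackSort u) (List.range' 1 (k + 1)) :=
    fun u hu => (stackSort_perm u).trans hu
  simp only [Function.iterate_succ, Function.iterate_zero, Function.comp_apply,
    id_eq] at h3 ⊢
  rw [step π hπ, step (stackSort π) (sperm π hπ),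
    step (stackSort (stackSort π)) (sperm _ (sperm π hπ)), h3, herange,
    map_sub_range' k 1]
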